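/- Let A, B be R-algebras satisfying condition (♠) and let L be a Lie triple derivation of A ⊕ B. Then L((a,b)) = (l_A(a) + h_B(b), h_A(a) + l_B(b)) where l_A is a Lie triple derivation of A, l_B is a Lie triple derivation of B, h_A: A → B is linear with h_A([[a₁,a₂],a₃]) = 0 and h_A(a) ∈ Z(B), and h_B: B → A is linear with h_B([[b₁,b₂],b₃]) = 0 and h_B(b) ∈ Z(A). -/

import Mathlib

/-- The Lie bracket `[x,y] = xy - yx` in an associative algebra. -/
def lieBr {A : Type*} [Ring A] (x y : A) : A := x * y - y * x

/-- `L` is a Lie triple derivation. -/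
def IsLieTripleDer {R A : Type*} [CommRing R] [Ring A] [Algebra R A]
    (L : A →ₗ[R] A) : Prop :=
  ∀ x y z : A,
    L (lieBr (lieBr x y) z) =
      lieBr (lieBr (L x) y) z + lieBr (lieBr x (L y)) z + lieBr (lieBr x y) (L z)

/-- `L` is proper: the sum of a derivation and a central-valued linear map annihilating all
second commutators. -/
def IsProperLTD {R A : Type*} [CommRing R] [Ring A] [Algebra R A]
    (L : A →ₗ[R] A) : Prop :=
  ∃ D F : A →ₗ[R] A,
    (∀ x y : A, D (x * y) = D x * y + x * D y) ∧
    (∀ a : A, F a ∈ Set.center A) ∧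
    (∀ x y z : A, F (lieBr (lieBr x y) z) = 0) ∧
    L = D + F

/-- Condition (♠): the centre consists exactly of the elements killed by all double brackets. -/
def CondSpade (A : Type*) [Ring A] : Prop :=
  Set.center A = {a : A | ∀ x y : A, lieBr (lieBr a x) y = 0}

lemma lieBr_prod {A B : Type*} [Ring A] [Ring B] (p q : A × B) :
    lieBr p q = (lieBr p.1 q.1, lieBr p.2 q.2) := by
  simp [lieBr, Prod.ext_iff, Prod.mul_def, Prod.sub_def]

/-- Decomposition of a Lie triple derivation of `A ⊕ B`. -/
theorem lieTripleDer_prod_decomposition {R A B : Type*} [CommRing R] [Ring A] [Algebra R A]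
    [Ring B] [Algebra R B]
    (hA : CondSpade A) (hB : CondSpade B)
    (L : A × B →ₗ[R] A × B) (hL : IsLieTripleDer L) :
    ∃ (lA : A →ₗ[R] A) (lB : B →ₗ[R] B) (hmapA : A →ₗ[R] B) (hmapB : B →ₗ[R] A),
      IsLieTripleDer lA ∧ IsLieTripleDer lB ∧
      (∀ a₁ a₂ a₃ : A, hmapA (lieBr (lieBr a₁ a₂) a₃) = 0) ∧
      (∀ a : A, hmapA a ∈ Set.center B) ∧
      (∀ b₁ b₂ b₃ : B, hmapB (lieBr (lieBr b₁ b₂) b₃) = 0) ∧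
      (∀ b : B, hmapB b ∈ Set.center A) ∧
      (∀ (a : A) (b : B), L (a, b) = (lA a + hmapB b, hmapA a + lB b)) := by
  refine ⟨(LinearMap.fst R A B).comp (L.comp (LinearMap.inl R A B)),
    (LinearMap.snd R A B).comp (L.comp (LinearMap.inr R A B)),
    (LinearMap.snd R A B).comp (L.comp (LinearMap.inl R A B)),
    (LinearMap.fst R A B).comp (L.comp (LinearMap.inr R A B)),
    ?_, ?_, ?_, ?_, ?_, ?_, ?_⟩
  · intro x y z
    have := hL (x, 0) (y, 0) (z, 0)
    simp only [lieBr_prod] at this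
    have h1 := congrArg Prod.fst this
    simpa [lieBr, Prod.ext_iff] using h1
  · intro x y z
    have := hL (0, x) (0, y) (0, z)
    simp only [lieBr_prod] at this
    have h1 := congrArg Prod.snd this
    simpa [lieBr, Prod.ext_iff] using h1
  · intro x y z
    have := hL (x, 0) (y, 0) (z, 0)
    simp only [lieBr_prod] at this
    have h1 := congrArg Prod.snd this
    simpa [lieBr, Prod.ext_iff] using h1
  · intro a
    rw [hB]
    intro u v
    have := hL (a, 0) (0, u) (0, v)
    simp only [lieBr_prod] at this
    have h1 := congrArg Prod.snd this
    simp only [lieBr] at h1 ⊢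
    have h0 : L ((0 : A), (0 : B)) = 0 := map_zero L
    simpa [h0] using h1.symm
  · intro x y z
    have := hL (0, x) (0, y) (0, z)
    simp only [lieBr_prod] at this
    have h1 := congrArg Prod.fst this
    simpa [lieBr, Prod.ext_iff] using h1
  · intro b
    rw [hA]
    intro u v
    have := hL (0, b) (u, 0) (v, 0)
    simp only [lieBr_prod] at this
    have h1 := congrArg Prod.fst this
    simp only [lieBr] at h1 ⊢
    have h0 : L ((0 : A), (0 : B)) = 0 := map_zero L
    simpa [h0] using h1.symm
  · intro a b
    have : (a, b) = ((a, 0) : A × B) + (0, b) := by simp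
    rw [this, map_add]
    simp [Prod.ext_iff]
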